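/- Phragmén's unordered method satisfies the following proportionality criterion: let 1 ≤ ℓ ≤ M and let σ ⊆ C with |σ| ≥ ℓ. If the number of ballots equal to σ satisfies v_σ > (ℓ/(M+1))·V, then every possible outcome E of Phragmén's unordered method for M seats contains at least ℓ candidates from σ, i.e. |E ∩ σ| ≥ ℓ. -/

import Mathlib

open Finset

/-- The number of ballots containing candidate `i` (as a rational number). -/
def phVotes {C : Type} [Fintype C] [DecidableEq C] (v : Finset C → ℕ) (i : C) : ℚ :=
  ∑ σ ∈ Finset.univ.filter (fun σ : Finset C => i ∈ σ), (v σ : ℚ)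

/-- Phragmén's `t_i = (1 + Σ_{σ∋i} v_σ r_σ)/(Σ_{σ∋i} v_σ)` for the current loads `r`. -/
def phT {C : Type} [Fintype C] [DecidableEq C]
    (v : Finset C → ℕ) (r : Finset C → ℚ) (i : C) : ℚ :=
  (1 + ∑ σ ∈ Finset.univ.filter (fun σ : Finset C => i ∈ σ), (v σ : ℚ) * r σ) / phVotes v i

/-- The ballot loads after electing the candidates in the list `l`
(most recently elected first); initially all loads are `0`, and when `i` is
elected the load of every ballot containing `i` is set to `t_i`. -/
def phLoads {C : Type} [Fintype C] [DecidableEq C] (v : Finset C → ℕ) :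
    List C → Finset C → ℚ
  | [], _ => 0
  | i :: l, σ => if i ∈ σ then phT v (phLoads v l) i else phLoads v l σ

/-- `l` (most recently elected first) is a valid sequence of elections for
Phragmén's unordered method: each newly elected candidate is a not yet elected
candidate with positive vote count minimizing `t_i`. -/
def phValid {C : Type} [Fintype C] [DecidableEq C] (v : Finset C → ℕ) : List C → Prop
  | [] => True
  | i :: l => phValid v l ∧ i ∉ l ∧ 0 < phVotes v i ∧
      ∀ j : C, j ∉ l → 0 < phVotes v j →
        phT v (phLoads v l) i ≤ phT v (phLoads v l) j

/-- `S` is a possible outcome of Phragmén's unordered method for `M` seats: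
its elements can be elected in some order by the rule, ties broken arbitrarily. -/
def PhragmenOutcome {C : Type} [Fintype C] [DecidableEq C]
    (v : Finset C → ℕ) (M : ℕ) (S : Finset C) : Prop :=
  ∃ l : List C, phValid v l ∧ l.length = M ∧ l.toFinset = S

section Aux

variable {C : Type} [Fintype C] [DecidableEq C] (v : Finset C → ℕ)

lemma phVotes_nonneg (i : C) : 0 ≤ phVotes v i :=
  Finset.sum_nonneg fun _ _ => Nat.cast_nonneg _

lemma phVotes_pos {σ : Finset C} (hσ : 0 < (v σ : ℚ)) {j : C} (hj : j ∈ σ) :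
    0 < phVotes v j := by
  have hmem : σ ∈ Finset.univ.filter (fun τ : Finset C => j ∈ τ) :=
    Finset.mem_filter.mpr ⟨Finset.mem_univ _, hj⟩
  exact lt_of_lt_of_le hσ (Finset.single_le_sum (f := fun τ : Finset C => (v τ : ℚ))
    (fun _ _ => Nat.cast_nonneg _) hmem)

lemma phT_mul (r : Finset C → ℚ) (i : C) (h : phVotes v i ≠ 0) :
    phVotes v i * phT v r i
      = 1 + ∑ τ ∈ Finset.univ.filter (fun τ : Finset C => i ∈ τ), (v τ : ℚ) * r τ := by
  rw [phT, mul_div_cancel₀ _ h]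

lemma phLoads_nonneg : ∀ l : List C, phValid v l → ∀ τ, 0 ≤ phLoads v l τ
  | [], _, τ => le_of_eq rfl
  | i :: l, hl, τ => by
    obtain ⟨h1, _, h3, _⟩ := hl
    simp only [phLoads]
    split
    · have hs : 0 ≤ ∑ τ ∈ Finset.univ.filter (fun τ : Finset C => i ∈ τ),
          (v τ : ℚ) * phLoads v l τ :=
        Finset.sum_nonneg fun τ _ => mul_nonneg (Nat.cast_nonneg _) (phLoads_nonneg l h1 τ)
      exact div_nonneg (by linarith) (le_of_lt h3)
    · exact phLoads_nonneg l h1 τ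

lemma phLoads_total : ∀ l : List C, phValid v l →
    ∑ τ : Finset C, (v τ : ℚ) * phLoads v l τ = l.length
  | [], _ => by simp [phLoads]
  | i :: l, hl => by
    obtain ⟨h1, _, h3, _⟩ := hl
    have ih := phLoads_total l h1
    have hsplit := Finset.sum_filter_add_sum_filter_not Finset.univ
      (fun τ : Finset C => i ∈ τ) (fun τ => (v τ : ℚ) * phLoads v (i :: l) τ)
    have hsplit' := Finset.sum_filter_add_sum_filter_not Finset.univ
      (fun τ : Finset C => i ∈ τ) (fun τ => (v τ : ℚ) * phLoads v l τ)
    have h4 : ∑ τ ∈ Finset.univ.filter (fun τ : Finset C => i ∈ τ),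
        (v τ : ℚ) * phLoads v (i :: l) τ
        = 1 + ∑ τ ∈ Finset.univ.filter (fun τ : Finset C => i ∈ τ),
            (v τ : ℚ) * phLoads v l τ := by
      rw [← phT_mul v (phLoads v l) i (ne_of_gt h3), phVotes, Finset.sum_mul]
      refine Finset.sum_congr rfl fun τ hτ => ?_
      have : i ∈ τ := (Finset.mem_filter.mp hτ).2
      simp only [phLoads, if_pos this]
    have h5 : ∑ τ ∈ Finset.univ.filter (fun τ : Finset C => ¬ i ∈ τ),
        (v τ : ℚ) * phLoads v (i :: l) τ
        = ∑ τ ∈ Finset.univ.filter (fun τ : Finset C => ¬ i ∈ τ),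
            (v τ : ℚ) * phLoads v l τ := by
      refine Finset.sum_congr rfl fun τ hτ => ?_
      have : ¬ i ∈ τ := (Finset.mem_filter.mp hτ).2
      simp only [phLoads, if_neg this]
    rw [← hsplit, h4, h5]
    rw [← hsplit'] at ih
    simp only [List.length_cons]
    push_cast
    linarith

/-- Invariant: every current load is at most `t_j` for any unelected candidate
`j` with positive votes. -/
lemma phLoads_le_phT : ∀ l : List C, phValid v l →
    ∀ j : C, j ∉ l → 0 < phVotes v j → ∀ τ, phLoads v l τ ≤ phT v (phLoads v l) j
  | [], _, j, _, hjW, τ => by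
    simp only [phLoads, phT, mul_zero, Finset.sum_const_zero, add_zero]
    exact div_nonneg zero_le_one (phVotes_nonneg v j)
  | i :: l, hl, j, hj, hjW, τ => by
    obtain ⟨h1, h2, h3, h4⟩ := hl
    have hjl : j ∉ l := fun h => hj (List.mem_cons_of_mem _ h)
    have hji : j ≠ i := fun h => hj (h ▸ List.mem_cons_self)
    have hmono : ∀ τ, phLoads v l τ ≤ phLoads v (i :: l) τ := by
      intro τ
      simp only [phLoads]
      split
      · exact phLoads_le_phT l h1 i h2 h3 τ
      · exact le_refl _
    have hT : phT v (phLoads v l) j ≤ phT v (phLoads v (i :: l)) j := by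
      unfold phT
      have hnum : ∑ τ ∈ Finset.univ.filter (fun τ : Finset C => j ∈ τ),
          (v τ : ℚ) * phLoads v l τ
          ≤ ∑ τ ∈ Finset.univ.filter (fun τ : Finset C => j ∈ τ),
              (v τ : ℚ) * phLoads v (i :: l) τ :=
        Finset.sum_le_sum fun τ _ => mul_le_mul_of_nonneg_left (hmono τ) (Nat.cast_nonneg _)
      exact div_le_div_of_nonneg_right (by linarith) hjW.le
    refine le_trans ?_ hT
    simp only [phLoads]
    split
    · exact h4 j hjl hjW
    · exact phLoads_le_phT l h1 j hjl hjW τ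

/-- Key bound: for an unelected `j ∈ σ`, its `t`-value is at most
`r_σ + 1/v_σ`. -/
lemma phT_le_load (l : List C) (hl : phValid v l) (σ : Finset C)
    (hσ : 0 < (v σ : ℚ)) {j : C} (hj : j ∈ σ) (hjl : j ∉ l) :
    phT v (phLoads v l) j ≤ phLoads v l σ + 1 / (v σ : ℚ) := by
  set r := phLoads v l with hr
  have hjW : 0 < phVotes v j := phVotes_pos v hσ hj
  set W := phVotes v j with hW
  set t := phT v r j with ht
  have hmem : σ ∈ Finset.univ.filter (fun τ : Finset C => j ∈ τ) :=
    Finset.mem_filter.mpr ⟨Finset.mem_univ _, hj⟩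
  have heq : W * t = 1 + ∑ τ ∈ Finset.univ.filter (fun τ : Finset C => j ∈ τ),
      (v τ : ℚ) * r τ := phT_mul v r j (ne_of_gt hjW)
  have hsplit : ∑ τ ∈ Finset.univ.filter (fun τ : Finset C => j ∈ τ), (v τ : ℚ) * r τ
      = (v σ : ℚ) * r σ
        + ∑ τ ∈ (Finset.univ.filter (fun τ : Finset C => j ∈ τ)).erase σ,
            (v τ : ℚ) * r τ :=
    (Finset.add_sum_erase _ _ hmem).symm
  have hbound : ∑ τ ∈ (Finset.univ.filter (fun τ : Finset C => j ∈ τ)).erase σ,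
      (v τ : ℚ) * r τ
      ≤ ∑ τ ∈ (Finset.univ.filter (fun τ : Finset C => j ∈ τ)).erase σ, (v τ : ℚ) * t :=
    Finset.sum_le_sum fun τ _ =>
      mul_le_mul_of_nonneg_left (phLoads_le_phT v l hl j hjl hjW τ) (Nat.cast_nonneg _)
  have hWσ : ∑ τ ∈ (Finset.univ.filter (fun τ : Finset C => j ∈ τ)).erase σ, (v τ : ℚ)
      = W - (v σ : ℚ) := by
    rw [Finset.sum_erase_eq_sub hmem]; rfl
  have h5 : W * t ≤ 1 + (v σ : ℚ) * r σ + (W - (v σ : ℚ)) * t := by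
    rw [heq, hsplit]
    have : ∑ τ ∈ (Finset.univ.filter (fun τ : Finset C => j ∈ τ)).erase σ, (v τ : ℚ) * t
        = (W - (v σ : ℚ)) * t := by rw [← Finset.sum_mul, hWσ]
    linarith [hbound, this.le, this.ge]
  have h6 : (v σ : ℚ) * t ≤ 1 + (v σ : ℚ) * r σ := by nlinarith [h5]
  rw [show r σ + 1 / (v σ : ℚ) = ((v σ : ℚ) * r σ + 1) / (v σ : ℚ) by field_simp]
  rw [le_div_iff₀ hσ]
  nlinarith [h6]

lemma phValid_nodup : ∀ l : List C, phValid v l → l.Nodup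
  | [], _ => List.nodup_nil
  | _ :: l, ⟨h1, h2, _, _⟩ => List.nodup_cons.mpr ⟨h2, phValid_nodup l h1⟩

lemma exists_unelected (l : List C) (σ : Finset C)
    (h : l.countP (· ∈ σ) < σ.card) : ∃ j ∈ σ, j ∉ l := by
  by_contra hc
  push_neg at hc
  have hsub : σ ⊆ (l.filter (· ∈ σ)).toFinset := by
    intro j hj
    simp only [List.mem_toFinset, List.mem_filter]
    exact ⟨hc j hj, by simpa using hj⟩
  have h1 := Finset.card_le_card hsub
  have h2 := List.toFinset_card_le (l.filter (· ∈ σ))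
  rw [← List.countP_eq_length_filter] at h2
  omega

lemma countP_eq_card (l : List C) (hnd : l.Nodup) (σ : Finset C) :
    l.countP (· ∈ σ) = (l.toFinset ∩ σ).card := by
  have h1 : l.toFinset ∩ σ = (l.filter (· ∈ σ)).toFinset := by
    ext j
    simp [List.mem_filter, and_comm]
  rw [h1, List.toFinset_card_of_nodup (hnd.filter _), ← List.countP_eq_length_filter]

lemma loadSigma (σ : Finset C) (hσ : 0 < (v σ : ℚ)) :
    ∀ l : List C, phValid v l → l.countP (· ∈ σ) < σ.card →
      phLoads v l σ ≤ (l.countP (· ∈ σ) : ℚ) / (v σ : ℚ)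
  | [], _, _ => by simp [phLoads]
  | i :: l, hl, hcnt => by
    obtain ⟨h1, h2, h3, h4⟩ := hl
    have hle : l.countP (· ∈ σ) ≤ (i :: l).countP (· ∈ σ) := by
      rw [List.countP_cons]; omega
    have hcl : l.countP (· ∈ σ) < σ.card := lt_of_le_of_lt hle hcnt
    have ih := loadSigma σ hσ l h1 hcl
    by_cases hi : i ∈ σ
    · obtain ⟨j, hjσ, hjl⟩ := exists_unelected l σ hcl
      have hjW : 0 < phVotes v j := phVotes_pos v hσ hjσ
      have ht1 : phT v (phLoads v l) i ≤ phT v (phLoads v l) j := h4 j hjl hjW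
      have ht2 : phT v (phLoads v l) j ≤ phLoads v l σ + 1 / (v σ : ℚ) :=
        phT_le_load v l h1 σ hσ hjσ hjl
      have hcc : ((i :: l).countP (· ∈ σ) : ℚ) = (l.countP (· ∈ σ) : ℚ) + 1 := by
        rw [List.countP_cons]
        simp [hi]
      simp only [phLoads, if_pos hi]
      rw [hcc, add_div]
      have h1v : (1 : ℚ) / (v σ : ℚ) = 1 / (v σ : ℚ) := rfl
      calc phT v (phLoads v l) i ≤ phLoads v l σ + 1 / (v σ : ℚ) := le_trans ht1 ht2
        _ ≤ (l.countP (· ∈ σ) : ℚ) / (v σ : ℚ) + 1 / (v σ : ℚ) := by linarith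
    · have hcc : (i :: l).countP (· ∈ σ) = l.countP (· ∈ σ) := by
        rw [List.countP_cons]
        simp [hi]
      simp only [phLoads, if_neg hi, hcc]
      exact ih

end Aux

/-- Proportionality of Phragmén's unordered method: if `1 ≤ ℓ ≤ M`, `σ` has at
least `ℓ` candidates, and more than `(ℓ/(M+1))·V` voters cast exactly the ballot
`σ`, then every possible outcome `E` for `M` seats contains at least `ℓ`
candidates from `σ`. -/
theorem stmt_13 {C : Type} [Fintype C] [DecidableEq C]
    (v : Finset C → ℕ) (hv0 : v ∅ = 0)
    (M : ℕ) (hM1 : 1 ≤ M) (hM2 : M ≤ Fintype.card C)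
    (ℓ : ℕ) (hl1 : 1 ≤ ℓ) (hl2 : ℓ ≤ M)
    (σ : Finset C) (hσ : ℓ ≤ σ.card)
    (hbig : (ℓ : ℚ) * (∑ τ : Finset C, (v τ : ℚ)) < ((M : ℚ) + 1) * (v σ : ℚ)) :
    ∀ E : Finset C, PhragmenOutcome v M E → ℓ ≤ (E ∩ σ).card := by
  rintro E ⟨l, hval, hlen, htf⟩
  by_contra hcon
  push_neg at hcon
  have hV0 : 0 ≤ ∑ τ : Finset C, (v τ : ℚ) :=
    Finset.sum_nonneg fun _ _ => Nat.cast_nonneg _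
  have hvσ : 0 < (v σ : ℚ) := by
    by_contra hv
    push_neg at hv
    have h1 : (0 : ℚ) ≤ (ℓ : ℚ) * ∑ τ : Finset C, (v τ : ℚ) :=
      mul_nonneg (Nat.cast_nonneg _) hV0
    have h2 : ((M : ℚ) + 1) * (v σ : ℚ) ≤ 0 := by
      apply mul_nonpos_of_nonneg_of_nonpos _ hv
      positivity
    linarith
  have hnd := phValid_nodup v l hval
  have hcount : l.countP (· ∈ σ) = (E ∩ σ).card := by
    rw [countP_eq_card l hnd σ, htf]
  have hclt : l.countP (· ∈ σ) < σ.card := by omega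
  obtain ⟨c, hcσ, hcl⟩ := exists_unelected l σ hclt
  have hcW : 0 < phVotes v c := phVotes_pos v hvσ hcσ
  set r := phLoads v l with hr
  set t := phT v r c with ht
  have ht1 : t ≤ r σ + 1 / (v σ : ℚ) := phT_le_load v l hval σ hvσ hcσ hcl
  have ht2 : r σ ≤ (l.countP (· ∈ σ) : ℚ) / (v σ : ℚ) := loadSigma v σ hvσ l hval hclt
  have hload : ∀ τ, r τ ≤ t := phLoads_le_phT v l hval c hcl hcW
  have htot : ∑ τ : Finset C, (v τ : ℚ) * r τ = (M : ℚ) := by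
    rw [phLoads_total v l hval, hlen]
  have heq : phVotes v c * t
      = 1 + ∑ τ ∈ Finset.univ.filter (fun τ : Finset C => c ∈ τ), (v τ : ℚ) * r τ :=
    phT_mul v r c (ne_of_gt hcW)
  -- M + 1 ≤ V * t
  have hVt : (M : ℚ) + 1 ≤ (∑ τ : Finset C, (v τ : ℚ)) * t := by
    have hs1 := Finset.sum_filter_add_sum_filter_not Finset.univ
      (fun τ : Finset C => c ∈ τ) (fun τ => (v τ : ℚ) * r τ)
    have hs2 := Finset.sum_filter_add_sum_filter_not Finset.univ
      (fun τ : Finset C => c ∈ τ) (fun τ => (v τ : ℚ) * t)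
    have hA : ∑ τ ∈ Finset.univ.filter (fun τ : Finset C => c ∈ τ), (v τ : ℚ) * t
        = phVotes v c * t := by rw [phVotes, Finset.sum_mul]
    have hB : ∑ τ ∈ Finset.univ.filter (fun τ : Finset C => ¬ c ∈ τ), (v τ : ℚ) * r τ
        ≤ ∑ τ ∈ Finset.univ.filter (fun τ : Finset C => ¬ c ∈ τ), (v τ : ℚ) * t :=
      Finset.sum_le_sum fun τ _ => mul_le_mul_of_nonneg_left (hload τ) (Nat.cast_nonneg _)
    have hC : (∑ τ : Finset C, (v τ : ℚ)) * t = ∑ τ : Finset C, (v τ : ℚ) * t := by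
      rw [Finset.sum_mul]
    rw [hC, ← hs2, hA, heq, ← htot, ← hs1]
    linarith
  -- t ≤ ℓ / v σ
  have hcnt : (l.countP (· ∈ σ) : ℚ) ≤ (ℓ : ℚ) - 1 := by
    have : l.countP (· ∈ σ) + 1 ≤ ℓ := by omega
    have := (Nat.cast_le (α := ℚ)).mpr this
    push_cast at this
    linarith
  have htb : t ≤ (ℓ : ℚ) / (v σ : ℚ) := by
    have : t ≤ ((ℓ : ℚ) - 1) / (v σ : ℚ) + 1 / (v σ : ℚ) := by
      have h3 : (l.countP (· ∈ σ) : ℚ) / (v σ : ℚ) ≤ ((ℓ : ℚ) - 1) / (v σ : ℚ) :=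
        div_le_div_of_nonneg_right hcnt hvσ.le
      linarith
    rwa [← add_div, sub_add_cancel] at this
  have h7 : t * (v σ : ℚ) ≤ (ℓ : ℚ) := (le_div_iff₀ hvσ).mp htb
  have h8 : ((M : ℚ) + 1) * (v σ : ℚ) ≤ ((∑ τ : Finset C, (v τ : ℚ)) * t) * (v σ : ℚ) :=
    mul_le_mul_of_nonneg_right hVt (le_of_lt hvσ)
  have h9 : (∑ τ : Finset C, (v τ : ℚ)) * (t * (v σ : ℚ))
      ≤ (∑ τ : Finset C, (v τ : ℚ)) * (ℓ : ℚ) :=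
    mul_le_mul_of_nonneg_left h7 hV0
  nlinarith [hbig, h8, h9]
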